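/- Assume (H1)–(H3) for the discrete system on ℤ. Then every solution x = (x₁,…,xₙ) of the system for k ≥ k₀ with x_i(s) ≥ 0 for k₀ − θ ≤ s ≤ k₀ satisfies x_i^m ≤ liminf_{k→+∞} x_i(k) ≤ limsup_{k→+∞} x_i(k) ≤ x_i^M for every i = 1,…,n; in particular the system is permanent. (Lemma 3.1 and Theorem 3.1 in the case 𝕋 = ℤ.) -/

import Mathlib

open Filter Finset

private lemma tele_up (y : ℤ → ℝ) (C : ℝ) (K : ℤ)
    (h : ∀ s, K ≤ s → y (s + 1) ≤ y s + C) :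
    ∀ (k : ℤ), K ≤ k → ∀ (t : ℕ), y (k + t) ≤ y k + t * C := by
  intro k hk t
  induction t with
  | zero => simp
  | succ t ih =>
    have h1 := h (k + t) (by omega)
    have e : (k + ((t : ℕ) + 1 : ℕ) : ℤ) = (k + t) + 1 := by push_cast; ring
    rw [e]
    push_cast
    push_cast at ih
    linarith

private lemma tele_down (y : ℤ → ℝ) (C : ℝ) (K : ℤ)
    (h : ∀ s, K ≤ s → y s + C ≤ y (s + 1)) :
    ∀ (k : ℤ), K ≤ k → ∀ (t : ℕ), y k + t * C ≤ y (k + t) := by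
  intro k hk t
  have := tele_up (fun s => -(y s)) (-C) K
    (by intro s hs; have := h s hs; show -(y (s+1)) ≤ -(y s) + -C; linarith) k hk t
  linarith

private lemma eventual_upper (y : ℤ → ℝ) (d M : ℝ) (hd : 0 < d) (K₀ : ℤ)
    (h : ∀ k, K₀ ≤ k → y (k + 1) ≤ max (y k - d) M) :
    ∃ K : ℤ, ∀ k, K ≤ k → y k ≤ M := by
  have key : ∀ t : ℕ, y (K₀ + t) ≤ max (y K₀ - t * d) M := by
    intro t
    induction t with
    | zero => simp
    | succ t ih =>
      have h1 := h (K₀ + t) (by omega)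
      have e : (K₀ + ((t : ℕ) + 1 : ℕ) : ℤ) = (K₀ + t) + 1 := by push_cast; ring
      rw [e]
      refine h1.trans ?_
      rcases le_max_iff.mp ih with h2 | h2
      · rcases le_or_gt (y K₀ - ((t : ℕ) + 1 : ℝ) * d) M with h3 | h3
        · refine le_max_of_le_right ?_
          rcases le_or_gt (y (K₀ + t) - d) M with h4 | h4
          · exact max_le h4 le_rfl
          · refine max_le (by push_cast at h3 ⊢; linarith) le_rfl
        · refine le_max_of_le_left ?_
          refine max_le (by push_cast; linarith) (by push_cast at h3 ⊢; linarith)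
      · refine le_max_of_le_right (max_le (by linarith) le_rfl)
  obtain ⟨J, hJ⟩ := exists_nat_ge ((y K₀ - M) / d)
  refine ⟨K₀ + J, fun k hk => ?_⟩
  have ht : k = K₀ + ((k - K₀).toNat : ℤ) := by omega
  have h2 := key (k - K₀).toNat
  rw [← ht] at h2
  have htJ : (J : ℝ) ≤ ((k - K₀).toNat : ℝ) := by
    have : (J : ℤ) ≤ (k - K₀).toNat := by omega
    exact_mod_cast this
  have h3 : y K₀ - ((k - K₀).toNat : ℝ) * d ≤ M := by
    rw [div_le_iff₀ hd] at hJ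
    nlinarith
  exact h2.trans (max_le h3 le_rfl)

private lemma eventual_lower (y : ℤ → ℝ) (d B : ℝ) (hd : 0 < d) (K₀ : ℤ)
    (h : ∀ k, K₀ ≤ k → min (y k + d) B ≤ y (k + 1)) :
    ∃ K : ℤ, ∀ k, K ≤ k → B ≤ y k := by
  obtain ⟨K, hK⟩ := eventual_upper (fun s => -(y s)) d (-B) hd K₀ (by
    intro k hk
    have := h k hk
    rcases min_le_iff.mp this with h1 | h1
    · exact le_max_of_le_left (by linarith)
    · exact le_max_of_le_right (by linarith))
  exact ⟨K, fun k hk => by have := hK k hk; linarith⟩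

set_option maxHeartbeats 2000000 in
theorem permanence_discrete
    (n : ℕ) (k₀ : ℤ) (τm τp δm δp θ : ℕ)
    (a b : Fin n → ℤ → ℝ) (c : Fin n → Fin n → ℤ → ℝ) (d : Fin n → Fin n → ℝ)
    (τ δ : Fin n → ℤ → ℕ)
    (al au bl bu : Fin n → ℝ) (cl cu : Fin n → Fin n → ℝ)
    (xM xm : Fin n → ℝ) (x : Fin n → ℤ → ℝ)
    -- (H1): bounds of the coefficients
    (hal : ∀ i, 0 < al i) (ha : ∀ i k, al i ≤ a i k ∧ a i k ≤ au i)
    (hbl : ∀ i, 0 < bl i) (hb : ∀ i k, bl i ≤ b i k ∧ b i k ≤ bu i)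
    (hcl : ∀ i j, i ≠ j → 0 < cl i j)
    (hc : ∀ i j k, i ≠ j → cl i j ≤ c i j k ∧ c i j k ≤ cu i j)
    (hdij : ∀ i j, i ≠ j → 1 < d i j)
    (hτm : 0 < τm) (hτ : ∀ i k, τm ≤ τ i k ∧ τ i k ≤ τp)
    (hδm : 0 < δm) (hδ : ∀ j k, δm ≤ δ j k ∧ δ j k ≤ δp)
    (hθ : θ = max τp δp)
    -- regressivity
    (hreg : ∀ i, au i + ∑ j ∈ Finset.univ.erase i, cu i j < 1)
    -- definitions of the permanence bounds
    (hxM : ∀ i, xM i =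
      Real.log (((au i + ∑ j ∈ Finset.univ.erase i, cu i j) / bl i) *
        (1 - (au i + ∑ j ∈ Finset.univ.erase i, cu i j)) ^ (-(τp : ℤ))))
    (hxm : ∀ i, xm i =
      Real.log ((al i / bu i) * (1 - bu i * Real.exp (xM i)) ^ τp))
    -- (H3)
    (hH3a : ∀ i, bu i * Real.exp (xM i) < 1)
    (hH3b : ∀ i, al i * (1 - bu i * Real.exp (xM i)) ^ τp > bu i)
    -- x is a solution with nonnegative initial data
    (hinit : ∀ i, ∀ s : ℤ, k₀ - (θ : ℤ) ≤ s → s ≤ k₀ → 0 ≤ x i s)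
    (hsol : ∀ i, ∀ k : ℤ, k₀ ≤ k →
      x i (k + 1) - x i k =
        a i k - b i k * Real.exp (x i (k - (τ i k : ℤ))) +
          ∑ j ∈ Finset.univ.erase i, c i j k * Real.exp (x j (k - (δ j k : ℤ))) /
            (d i j + Real.exp (x j (k - (δ j k : ℤ))))) :
    ∀ i, ((xm i : EReal)) ≤ Filter.liminf (fun k : ℤ => ((x i k : EReal))) Filter.atTop ∧
      Filter.limsup (fun k : ℤ => ((x i k : EReal))) Filter.atTop ≤ ((xM i : EReal)) := by
  intro i
  -- basic positivity facts
  have halau : al i ≤ au i := le_trans (ha i 0).1 (ha i 0).2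
  have hblbu : bl i ≤ bu i := le_trans (hb i 0).1 (hb i 0).2
  have hal0 := hal i
  have hbl0 := hbl i
  have hbu0 : 0 < bu i := lt_of_lt_of_le hbl0 hblbu
  have hcsum : (0:ℝ) ≤ ∑ j ∈ Finset.univ.erase i, cu i j := by
    refine Finset.sum_nonneg fun j hj => ?_
    have hij : i ≠ j := ((Finset.mem_erase.mp hj).1).symm
    exact le_of_lt (lt_of_lt_of_le (hcl i j hij) ((hc i j 0 hij).1.trans (hc i j 0 hij).2))
  have hA0 : 0 < au i + ∑ j ∈ Finset.univ.erase i, cu i j := by linarith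
  have hA1 : au i + ∑ j ∈ Finset.univ.erase i, cu i j < 1 := hreg i
  have h1A : (0:ℝ) < 1 - (au i + ∑ j ∈ Finset.univ.erase i, cu i j) := by linarith
  -- closed form for exp (xM i)
  have hexpM : Real.exp (xM i) =
      (au i + ∑ j ∈ Finset.univ.erase i, cu i j) /
        (bl i * (1 - (au i + ∑ j ∈ Finset.univ.erase i, cu i j)) ^ τp) := by
    have hz : (0:ℝ) < (1 - (au i + ∑ j ∈ Finset.univ.erase i, cu i j)) ^ (-(τp:ℤ)) :=
      zpow_pos h1A _
    rw [hxM i, Real.exp_log (by positivity)]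
    rw [zpow_neg, zpow_natCast]
    field_simp
  -- step upper bound
  have SU : ∀ k, k₀ ≤ k → x i (k + 1) ≤ x i k +
      ((au i + ∑ j ∈ Finset.univ.erase i, cu i j)
        - bl i * Real.exp (x i (k - (τ i k : ℤ)))) := by
    intro k hk
    have hs := hsol i k hk
    have hsum : ∑ j ∈ Finset.univ.erase i,
        c i j k * Real.exp (x j (k - (δ j k : ℤ))) /
          (d i j + Real.exp (x j (k - (δ j k : ℤ)))) ≤
        ∑ j ∈ Finset.univ.erase i, cu i j := by
      refine Finset.sum_le_sum fun j hj => ?_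
      have hij : i ≠ j := ((Finset.mem_erase.mp hj).1).symm
      have hE : (0:ℝ) < Real.exp (x j (k - (δ j k : ℤ))) := Real.exp_pos _
      have hd1 : 1 < d i j := hdij i j hij
      have hc' := hc i j k hij
      have hcpos : 0 < c i j k := lt_of_lt_of_le (hcl i j hij) hc'.1
      have h1 : c i j k * Real.exp (x j (k - (δ j k : ℤ))) /
          (d i j + Real.exp (x j (k - (δ j k : ℤ)))) ≤ c i j k := by
        rw [div_le_iff₀ (by linarith)]
        nlinarith
      exact h1.trans hc'.2
    have hbterm : bl i * Real.exp (x i (k - (τ i k : ℤ)))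
        ≤ b i k * Real.exp (x i (k - (τ i k : ℤ))) :=
      mul_le_mul_of_nonneg_right (hb i k).1 (Real.exp_pos _).le
    have haterm := (ha i k).2
    linarith
  have SU' : ∀ k, k₀ ≤ k → x i (k + 1) ≤ x i k +
      (au i + ∑ j ∈ Finset.univ.erase i, cu i j) := by
    intro k hk
    have h1 := SU k hk
    have h2 : 0 < bl i * Real.exp (x i (k - (τ i k : ℤ))) :=
      mul_pos hbl0 (Real.exp_pos _)
    linarith
  -- step lower bound
  have SL : ∀ k, k₀ ≤ k →
      x i k + (al i - bu i * Real.exp (x i (k - (τ i k : ℤ)))) ≤ x i (k + 1) := by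
    intro k hk
    have hs := hsol i k hk
    have hsum : (0:ℝ) ≤ ∑ j ∈ Finset.univ.erase i,
        c i j k * Real.exp (x j (k - (δ j k : ℤ))) /
          (d i j + Real.exp (x j (k - (δ j k : ℤ)))) := by
      refine Finset.sum_nonneg fun j hj => ?_
      have hij : i ≠ j := ((Finset.mem_erase.mp hj).1).symm
      have hE : (0:ℝ) < Real.exp (x j (k - (δ j k : ℤ))) := Real.exp_pos _
      have hd1 : 1 < d i j := hdij i j hij
      have hcpos : 0 < c i j k := lt_of_lt_of_le (hcl i j hij) (hc i j k hij).1
      positivity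
    have hbterm : b i k * Real.exp (x i (k - (τ i k : ℤ)))
        ≤ bu i * Real.exp (x i (k - (τ i k : ℤ))) :=
      mul_le_mul_of_nonneg_right (hb i k).2 (Real.exp_pos _).le
    have haterm := (ha i k).1
    linarith
  -- eventual upper bound
  have keyU : ∀ ε : ℝ, 0 < ε → ∃ K : ℤ, ∀ k, K ≤ k → x i k ≤ xM i + ε := by
    intro ε hε
    have hd : 0 < (au i + ∑ j ∈ Finset.univ.erase i, cu i j) * (Real.exp ε - 1) :=
      mul_pos hA0 (by nlinarith [Real.add_one_le_exp ε])
    refine eventual_upper (x i) _ (xM i + ε) hd (k₀ + τp) ?_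
    intro k hk
    have hT2 : τ i k ≤ τp := (hτ i k).2
    have hkT : k₀ ≤ k - (τ i k : ℤ) := by omega
    have tel := tele_up (x i) (au i + ∑ j ∈ Finset.univ.erase i, cu i j) k₀ SU'
      (k - (τ i k : ℤ)) hkT (τ i k)
    have e1 : (k - ((τ i k : ℕ) : ℤ)) + ((τ i k : ℕ) : ℤ) = k := by ring
    rw [e1] at tel
    have hexplow : Real.exp (x i k) *
        (1 - (au i + ∑ j ∈ Finset.univ.erase i, cu i j)) ^ τp
        ≤ Real.exp (x i (k - (τ i k : ℤ))) := by
      have h2 : Real.exp (x i k - (τ i k : ℝ) * (au i + ∑ j ∈ Finset.univ.erase i, cu i j))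
          ≤ Real.exp (x i (k - (τ i k : ℤ))) := Real.exp_le_exp.mpr (by linarith)
      have h3 : Real.exp (x i k - (τ i k : ℝ) * (au i + ∑ j ∈ Finset.univ.erase i, cu i j))
          = Real.exp (x i k) *
            Real.exp (-(au i + ∑ j ∈ Finset.univ.erase i, cu i j)) ^ (τ i k) := by
        rw [← Real.exp_nat_mul, ← Real.exp_add]
        ring_nf
      have h5 : (1 - (au i + ∑ j ∈ Finset.univ.erase i, cu i j)) ^ τp
          ≤ Real.exp (-(au i + ∑ j ∈ Finset.univ.erase i, cu i j)) ^ (τ i k) := by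
        calc (1 - (au i + ∑ j ∈ Finset.univ.erase i, cu i j)) ^ τp
            ≤ (1 - (au i + ∑ j ∈ Finset.univ.erase i, cu i j)) ^ (τ i k) :=
              pow_le_pow_of_le_one h1A.le (by linarith) hT2
          _ ≤ Real.exp (-(au i + ∑ j ∈ Finset.univ.erase i, cu i j)) ^ (τ i k) := by
              refine pow_le_pow_left₀ h1A.le ?_ _
              nlinarith [Real.add_one_le_exp (-(au i + ∑ j ∈ Finset.univ.erase i, cu i j))]
      calc Real.exp (x i k) * (1 - (au i + ∑ j ∈ Finset.univ.erase i, cu i j)) ^ τp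
          ≤ Real.exp (x i k) *
              Real.exp (-(au i + ∑ j ∈ Finset.univ.erase i, cu i j)) ^ (τ i k) :=
            mul_le_mul_of_nonneg_left h5 (Real.exp_pos _).le
        _ = Real.exp (x i k - (τ i k : ℝ) * (au i + ∑ j ∈ Finset.univ.erase i, cu i j)) :=
            h3.symm
        _ ≤ _ := h2
    have hstep : x i (k + 1) ≤ x i k +
        ((au i + ∑ j ∈ Finset.univ.erase i, cu i j)
          - (au i + ∑ j ∈ Finset.univ.erase i, cu i j) * Real.exp (x i k - xM i)) := by
      have h6 := SU k (by omega)
      have h7 : (au i + ∑ j ∈ Finset.univ.erase i, cu i j) * Real.exp (x i k - xM i)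
          = bl i * ((1 - (au i + ∑ j ∈ Finset.univ.erase i, cu i j)) ^ τp
              * Real.exp (x i k)) := by
        have hp : (0:ℝ) < (1 - (au i + ∑ j ∈ Finset.univ.erase i, cu i j)) ^ τp :=
          pow_pos h1A τp
        have h7gen : ∀ A P E : ℝ, 0 < A → 0 < P →
            A * (E / (A / (bl i * P))) = bl i * (P * E) := by
          intro A P E hA hP
          field_simp
        rw [Real.exp_sub, hexpM]
        exact h7gen _ _ _ hA0 hp
      have h8 : (au i + ∑ j ∈ Finset.univ.erase i, cu i j) * Real.exp (x i k - xM i)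
          ≤ bl i * Real.exp (x i (k - (τ i k : ℤ))) := by
        rw [h7]
        refine mul_le_mul_of_nonneg_left ?_ hbl0.le
        linarith [hexplow]
      linarith
    rcases le_or_gt (x i k) (xM i + ε) with hcase | hcase
    · refine le_max_of_le_right ?_
      have h9 := Real.add_one_le_exp (x i k - xM i)
      nlinarith [Real.exp_pos (x i k - xM i),
        mul_nonneg (sub_nonneg.2 hcase) h1A.le, mul_nonneg hA0.le hε.le]
    · refine le_max_of_le_left ?_
      have h9 : Real.exp ε ≤ Real.exp (x i k - xM i) := Real.exp_le_exp.mpr (by linarith)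
      nlinarith [mul_le_mul_of_nonneg_left h9 hA0.le]
  -- eventual lower bound
  have keyL : ∀ γ : ℝ, 0 < γ → ∃ K : ℤ, ∀ k, K ≤ k → xm i - γ ≤ x i k := by
    intro γ hγ
    -- choose ε by continuity
    obtain ⟨ε, hε0, hεq, hεlog⟩ : ∃ ε : ℝ, 0 < ε ∧ bu i * Real.exp (xM i + ε) < 1 ∧
        (τp : ℝ) * Real.log (1 - bu i * Real.exp (xM i)) - γ / 2 <
          (τp : ℝ) * Real.log (1 - bu i * Real.exp (xM i + ε)) := by
      have hq0 : bu i * Real.exp (xM i) < 1 := hH3a i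
      have hcont1 : Filter.Tendsto (fun e : ℝ => bu i * Real.exp (xM i + e)) (nhds 0)
          (nhds (bu i * Real.exp (xM i))) := by
        have hc1 : ContinuousAt (fun e : ℝ => bu i * Real.exp (xM i + e)) 0 := by fun_prop
        simpa using hc1.tendsto
      have hcont2 : Filter.Tendsto
          (fun e : ℝ => (τp : ℝ) * Real.log (1 - bu i * Real.exp (xM i + e))) (nhds 0)
          (nhds ((τp : ℝ) * Real.log (1 - bu i * Real.exp (xM i)))) := by
        refine Filter.Tendsto.const_mul _ ?_
        have hlog : ContinuousAt Real.log (1 - bu i * Real.exp (xM i)) :=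
          Real.continuousAt_log (by linarith)
        have hc3 : Filter.Tendsto (fun e : ℝ => 1 - bu i * Real.exp (xM i + e)) (nhds 0)
            (nhds (1 - bu i * Real.exp (xM i))) := by
          have hc4 : ContinuousAt (fun e : ℝ => 1 - bu i * Real.exp (xM i + e)) 0 := by
            fun_prop
          simpa using hc4.tendsto
        have := hlog.tendsto.comp hc3
        exact this
      have h1 : ∀ᶠ e in nhds (0:ℝ), bu i * Real.exp (xM i + e) < 1 :=
        hcont1.eventually (eventually_lt_nhds hq0)
      have h2 : ∀ᶠ e in nhds (0:ℝ),
          (τp : ℝ) * Real.log (1 - bu i * Real.exp (xM i)) - γ / 2 <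
            (τp : ℝ) * Real.log (1 - bu i * Real.exp (xM i + e)) :=
        hcont2.eventually (eventually_gt_nhds (by linarith))
      have h3 : ∀ᶠ e in nhdsWithin (0:ℝ) (Set.Ioi 0),
          (bu i * Real.exp (xM i + e) < 1 ∧
            (τp : ℝ) * Real.log (1 - bu i * Real.exp (xM i)) - γ / 2 <
              (τp : ℝ) * Real.log (1 - bu i * Real.exp (xM i + e))) ∧ e ∈ Set.Ioi (0:ℝ) :=
        ((h1.and h2).filter_mono nhdsWithin_le_nhds).and self_mem_nhdsWithin
      obtain ⟨e, ⟨he1, he2⟩, he3⟩ := h3.exists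
      exact ⟨e, he3, he1, he2⟩
    obtain ⟨K₁, hK₁⟩ := keyU ε hε0
    have hq1 : bu i * Real.exp (xM i + ε) < 1 := hεq
    have hqpos : 0 < bu i * Real.exp (xM i + ε) := by positivity
    have hexpγ : Real.exp (-(γ/2)) < 1 := by
      rw [← Real.exp_zero]
      exact Real.exp_lt_exp.mpr (by linarith)
    have hσ0 : 0 < al i * (1 - Real.exp (-(γ/2))) :=
      mul_pos hal0 (by linarith)
    have hσexp : al i * (1 - Real.exp (-(γ/2))) = al i - al i * Real.exp (-(γ/2)) := by ring
    have hstepL : ∀ k, max K₁ k₀ + 2 * (τp:ℤ) ≤ k →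
        min (x i k + al i * (1 - Real.exp (-(γ/2))))
          (Real.log (al i * Real.exp (-(γ/2)) / bu i) + al i * (1 - Real.exp (-(γ/2)))
            + (τp:ℝ) * Real.log (1 - bu i * Real.exp (xM i + ε))) ≤ x i (k + 1) := by
      intro k hk
      have hmax1 : K₁ ≤ max K₁ k₀ := le_max_left _ _
      have hmax2 : k₀ ≤ max K₁ k₀ := le_max_right _ _
      rcases lt_or_ge (x i k + al i * (1 - Real.exp (-(γ/2)))) (x i (k+1)) with hc1 | hc1
      · exact (min_le_left _ _).trans hc1.le
      refine (min_le_right _ _).trans ?_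
      have hT2 : τ i k ≤ τp := (hτ i k).2
      have hk₀ : k₀ ≤ k := by omega
      have hkT : k₀ ≤ k - (τ i k : ℤ) := by omega
      have hwin : ∀ s : ℤ, k - (τ i k : ℤ) ≤ s →
          bu i * Real.exp (x i (s - (τ i s : ℤ))) ≤ bu i * Real.exp (xM i + ε) := by
        intro s hs
        refine mul_le_mul_of_nonneg_left (Real.exp_le_exp.mpr ?_) hbu0.le
        have h5 := (hτ i s).2
        have h6 : K₁ ≤ s - (τ i s : ℤ) := by omega
        have h7 := hK₁ _ h6
        linarith
      have htel : x i (k - (τ i k : ℤ)) + (τ i k : ℝ) * (al i - bu i * Real.exp (xM i + ε))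
          ≤ x i ((k - (τ i k : ℤ)) + ((τ i k : ℕ) : ℤ)) := by
        refine tele_down (x i) _ (k - (τ i k : ℤ)) ?_ _ le_rfl _
        intro s hs
        have h7 := SL s (by omega)
        have h8 := hwin s hs
        linarith
      have e1 : (k - ((τ i k : ℕ) : ℤ)) + ((τ i k : ℕ) : ℤ) = k := by ring
      rw [e1] at htel
      have hxsup : x i (k - (τ i k : ℤ)) ≤ xM i + ε := hK₁ _ (by omega)
      have h2 := SL k hk₀
      have h3 : al i * Real.exp (-(γ/2)) ≤ bu i * Real.exp (x i (k - (τ i k : ℤ))) := by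
        linarith
      have hθxs : Real.log (al i * Real.exp (-(γ/2)) / bu i) ≤ x i (k - (τ i k : ℤ)) := by
        rw [Real.log_le_iff_le_exp (by positivity), div_le_iff₀ hbu0]
        nlinarith [h3]
      have hmono : Real.log (al i * Real.exp (-(γ/2)) / bu i)
            - bu i * Real.exp (Real.log (al i * Real.exp (-(γ/2)) / bu i))
          ≤ x i (k - (τ i k : ℤ)) - bu i * Real.exp (x i (k - (τ i k : ℤ))) := by
        set u := Real.log (al i * Real.exp (-(γ/2)) / bu i) with hu
        set v := x i (k - (τ i k : ℤ)) with hv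
        have h4 : Real.exp v - Real.exp u ≤ Real.exp v * (v - u) := by
          have h5 := Real.add_one_le_exp (u - v)
          have h6 : Real.exp u = Real.exp v * Real.exp (u - v) := by
            rw [← Real.exp_add]; ring_nf
          nlinarith [Real.exp_pos v]
        have h7 : bu i * Real.exp v ≤ bu i * Real.exp (xM i + ε) :=
          mul_le_mul_of_nonneg_left (Real.exp_le_exp.mpr hxsup) hbu0.le
        nlinarith [sub_nonneg.mpr hθxs, Real.exp_pos v,
          mul_le_mul_of_nonneg_left h4 hbu0.le,
          mul_le_mul_of_nonneg_right h7 (sub_nonneg.mpr hθxs),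
          mul_nonneg (sub_nonneg.mpr hθxs)
            (by linarith : (0:ℝ) ≤ 1 - bu i * Real.exp (xM i + ε))]
      have hexpθ : bu i * Real.exp (Real.log (al i * Real.exp (-(γ/2)) / bu i))
          = al i * Real.exp (-(γ/2)) := by
        rw [Real.exp_log (by positivity)]
        field_simp
      have hlogq : Real.log (1 - bu i * Real.exp (xM i + ε))
          ≤ -(bu i * Real.exp (xM i + ε)) := by
        have h9 := Real.log_le_sub_one_of_pos
          (show (0:ℝ) < 1 - bu i * Real.exp (xM i + ε) by linarith)
        linarith
      have hTlog : (τp:ℝ) * Real.log (1 - bu i * Real.exp (xM i + ε))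
          ≤ (τ i k : ℝ) * (al i - bu i * Real.exp (xM i + ε)) := by
        have hTc : ((τ i k : ℕ) : ℝ) ≤ (τp : ℝ) := by exact_mod_cast hT2
        have hTnn : (0:ℝ) ≤ ((τ i k : ℕ) : ℝ) := by positivity
        rcases le_or_gt 0 (al i - bu i * Real.exp (xM i + ε)) with h8 | h8
        · have h9 : (τp:ℝ) * Real.log (1 - bu i * Real.exp (xM i + ε)) ≤ 0 :=
            mul_nonpos_of_nonneg_of_nonpos (by positivity) (by linarith)
          nlinarith
        · nlinarith [mul_nonneg (by linarith : (0:ℝ) ≤ (τp:ℝ) - ((τ i k : ℕ) : ℝ))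
              (by linarith : (0:ℝ) ≤ -(Real.log (1 - bu i * Real.exp (xM i + ε)))),
            mul_nonneg hTnn
              (by linarith [hal0] : (0:ℝ) ≤ al i - bu i * Real.exp (xM i + ε)
                - Real.log (1 - bu i * Real.exp (xM i + ε)))]
      linarith [htel, h2, hmono, hexpθ, hTlog, hσexp]
    obtain ⟨K₂, hK₂⟩ := eventual_lower (x i) _ _ hσ0 _ hstepL
    refine ⟨K₂, fun k hk => ?_⟩
    have hB := hK₂ k hk
    have h1q0 : (0:ℝ) < 1 - bu i * Real.exp (xM i) := by
      have := hH3a i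
      have : (0:ℝ) < bu i * Real.exp (xM i) := by positivity
      linarith [hH3a i]
    have hxmeq : xm i = Real.log (al i) - Real.log (bu i)
        + (τp:ℝ) * Real.log (1 - bu i * Real.exp (xM i)) := by
      rw [hxm i, Real.log_mul (ne_of_gt (by positivity)) (ne_of_gt (pow_pos h1q0 τp)),
        Real.log_div hal0.ne' hbu0.ne', Real.log_pow]
    have hθeq : Real.log (al i * Real.exp (-(γ/2)) / bu i)
        = Real.log (al i) - γ/2 - Real.log (bu i) := by
      rw [Real.log_div (ne_of_gt (by positivity)) hbu0.ne',
        Real.log_mul hal0.ne' (Real.exp_ne_zero _), Real.log_exp]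
      ring
    have hfin : xm i - γ ≤ Real.log (al i * Real.exp (-(γ/2)) / bu i)
        + al i * (1 - Real.exp (-(γ/2)))
        + (τp:ℝ) * Real.log (1 - bu i * Real.exp (xM i + ε)) := by
      rw [hxmeq, hθeq]
      linarith [hεlog, hσ0]
    exact hfin.trans hB
  -- conclusion via filters
  constructor
  · by_contra hcon
    push_neg at hcon
    obtain ⟨r, hr1, hr2⟩ := EReal.lt_iff_exists_real_btwn.mp hcon
    have hγ : 0 < xm i - r := by
      have := EReal.coe_lt_coe_iff.mp hr2
      linarith
    obtain ⟨K, hK⟩ := keyL (xm i - r) hγ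
    have hev : ∀ᶠ k in Filter.atTop, (r : EReal) ≤ ((x i k : EReal)) := by
      rw [Filter.eventually_atTop]
      refine ⟨K, fun k hk => ?_⟩
      have h1 := hK k hk
      exact_mod_cast EReal.coe_le_coe_iff.mpr (by linarith)
    have h2 : (r : EReal) ≤ Filter.liminf (fun k : ℤ => ((x i k : EReal))) Filter.atTop :=
      Filter.le_liminf_of_le (by isBoundedDefault) hev
    exact absurd h2 (not_le.mpr hr1)
  · by_contra hcon
    push_neg at hcon
    obtain ⟨r, hr1, hr2⟩ := EReal.lt_iff_exists_real_btwn.mp hcon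
    have hε : 0 < r - xM i := by
      have := EReal.coe_lt_coe_iff.mp hr1
      linarith
    obtain ⟨K, hK⟩ := keyU (r - xM i) hε
    have hev : ∀ᶠ k in Filter.atTop, ((x i k : EReal)) ≤ (r : EReal) := by
      rw [Filter.eventually_atTop]
      refine ⟨K, fun k hk => ?_⟩
      have h1 := hK k hk
      exact_mod_cast EReal.coe_le_coe_iff.mpr (by linarith)
    have h2 : Filter.limsup (fun k : ℤ => ((x i k : EReal))) Filter.atTop ≤ (r : EReal) :=
      Filter.limsup_le_of_le (by isBoundedDefault) hev
    exact absurd h2 (not_le.mpr hr2)
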